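/- Let X be a multiset of n points in ℤ^d, k dividing n, with cluster size s = n/k, and suppose X contains a submultiset S of s identical points. Let X' = X \ S. If Opt(X, k) ≤ B and s ≥ 4B+1, then Opt(X', k−1) = Opt(X, k), where Opt denotes the minimum cost of an equal clustering under the ℓ_p norm (p ≥ 1). -/

import Mathlib

open Finset

/-- The ℓ_p norm of a real vector, for integer `p ≥ 1`. -/
noncomputable def lpNorm (p : ℕ) {d : ℕ} (x : Fin d → ℝ) : ℝ :=
  (∑ i, |x i| ^ p) ^ ((1 : ℝ) / p)

/-- Cost of a cluster (multiset of integer points) with respect to a given center `c`. -/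
noncomputable def costW (p : ℕ) {d : ℕ} (T : Multiset (Fin d → ℤ)) (c : Fin d → ℝ) : ℝ :=
  (T.map (fun x => lpNorm p (fun i => c i - (x i : ℝ)))).sum

/-- Cost of a cluster: infimum over all centers `c ∈ ℝ^d`. -/
noncomputable def clCost (p : ℕ) {d : ℕ} (T : Multiset (Fin d → ℤ)) : ℝ :=
  sInf (Set.range (costW p T))

/-- Minimum cost of an equal clustering of `P` into `k` clusters of size `s` each. -/
noncomputable def OptCost (p : ℕ) {d : ℕ} (P : Multiset (Fin d → ℤ)) (k s : ℕ) : ℝ :=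
  sInf {r | ∃ X : Fin k → Multiset (Fin d → ℤ),
    (∑ i, X i = P) ∧ (∀ i, (X i).card = s) ∧ r = ∑ i, clCost p (X i)}

lemma lpNorm_eq (p : ℕ) {d : ℕ} (x : Fin d → ℝ) :
    lpNorm p x = (∑ i, |x i| ^ (p : ℝ)) ^ ((1 : ℝ) / p) := by
  simp [lpNorm, Real.rpow_natCast]

lemma lpNorm_nonneg (p : ℕ) {d : ℕ} (x : Fin d → ℝ) : 0 ≤ lpNorm p x := by
  apply Real.rpow_nonneg
  exact Finset.sum_nonneg fun i _ => pow_nonneg (abs_nonneg _) _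

lemma lpNorm_zero {p : ℕ} (hp : 1 ≤ p) {d : ℕ} : lpNorm p (fun _ : Fin d => (0:ℝ)) = 0 := by
  have : (0:ℝ) ^ ((1:ℝ)/p) = 0 := by
    apply Real.zero_rpow
    positivity
  rw [lpNorm]
  simpa [zero_pow (by omega : p ≠ 0)] using this

lemma lpNorm_neg (p : ℕ) {d : ℕ} (x : Fin d → ℝ) :
    lpNorm p (fun i => - x i) = lpNorm p x := by
  simp [lpNorm, abs_neg]

lemma lpNorm_triangle {p : ℕ} (hp : 1 ≤ p) {d : ℕ} (x y : Fin d → ℝ) :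
    lpNorm p (fun i => x i + y i) ≤ lpNorm p x + lpNorm p y := by
  rw [lpNorm_eq, lpNorm_eq, lpNorm_eq]
  exact Real.Lp_add_le univ x y (by exact_mod_cast hp)

lemma lpNorm_int_one_le {p : ℕ} (hp : 1 ≤ p) {d : ℕ} {a y : Fin d → ℤ} (h : a ≠ y) :
    1 ≤ lpNorm p (fun i => (a i : ℝ) - (y i : ℝ)) := by
  obtain ⟨i, hi⟩ : ∃ i, a i ≠ y i := by
    by_contra hc
    push_neg at hc
    exact h (funext hc)
  have h1 : (1:ℝ) ≤ |(a i : ℝ) - (y i : ℝ)| ^ p := by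
    have : (1:ℝ) ≤ |(a i : ℝ) - (y i : ℝ)| := by
      have : (1:ℤ) ≤ |a i - y i| := by rcases lt_or_gt_of_ne (sub_ne_zero.mpr hi) with h|h <;> [rw [abs_of_neg h]; rw [abs_of_pos h]] <;> omega
      calc (1:ℝ) ≤ |(a i - y i : ℤ)| := by exact_mod_cast this
        _ = |(a i : ℝ) - (y i : ℝ)| := by push_cast; ring_nf
    exact one_le_pow₀ this
  have hsum : (1:ℝ) ≤ ∑ j, |(a j : ℝ) - (y j : ℝ)| ^ p := by
    calc (1:ℝ) ≤ |(a i : ℝ) - (y i : ℝ)| ^ p := h1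
      _ ≤ ∑ j, |(a j : ℝ) - (y j : ℝ)| ^ p :=
        Finset.single_le_sum (f := fun j => |(a j : ℝ) - (y j : ℝ)| ^ p) (fun j _ => pow_nonneg (abs_nonneg _) _) (mem_univ i)
  rw [lpNorm]
  exact Real.one_le_rpow hsum (by positivity)

lemma costW_nonneg (p : ℕ) {d : ℕ} (T : Multiset (Fin d → ℤ)) (c : Fin d → ℝ) :
    0 ≤ costW p T c := by
  apply Multiset.sum_nonneg
  intro x hx
  obtain ⟨y, _, rfl⟩ := Multiset.mem_map.mp hx
  exact lpNorm_nonneg _ _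

lemma costW_add (p : ℕ) {d : ℕ} (T U : Multiset (Fin d → ℤ)) (c : Fin d → ℝ) :
    costW p (T + U) c = costW p T c + costW p U c := by
  simp [costW]

lemma costW_cons (p : ℕ) {d : ℕ} (y : Fin d → ℤ) (T : Multiset (Fin d → ℤ)) (c : Fin d → ℝ) :
    costW p (y ::ₘ T) c = lpNorm p (fun i => c i - (y i : ℝ)) + costW p T c := by
  simp [costW]

lemma costW_replicate (p : ℕ) {d : ℕ} (m : ℕ) (a : Fin d → ℤ) (c : Fin d → ℝ) :
    costW p (Multiset.replicate m a) c = m * lpNorm p (fun i => c i - (a i : ℝ)) := by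
  simp [costW, Multiset.map_replicate, Multiset.sum_replicate, nsmul_eq_mul]

lemma clCost_bddBelow (p : ℕ) {d : ℕ} (T : Multiset (Fin d → ℤ)) :
    BddBelow (Set.range (costW p T)) :=
  ⟨0, fun r ⟨c, hc⟩ => hc ▸ costW_nonneg p T c⟩

lemma clCost_nonneg (p : ℕ) {d : ℕ} (T : Multiset (Fin d → ℤ)) : 0 ≤ clCost p T :=
  le_csInf ⟨_, Set.mem_range_self 0⟩ (fun r ⟨c, hc⟩ => hc ▸ costW_nonneg p T c)

lemma clCost_le_costW (p : ℕ) {d : ℕ} (T : Multiset (Fin d → ℤ)) (c : Fin d → ℝ) :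
    clCost p T ≤ costW p T c :=
  csInf_le (clCost_bddBelow p T) (Set.mem_range_self c)

lemma exists_center (p : ℕ) {d : ℕ} (T : Multiset (Fin d → ℤ)) {ε : ℝ} (hε : 0 < ε) :
    ∃ c, costW p T c < clCost p T + ε := by
  obtain ⟨r, ⟨c, rfl⟩, hr⟩ := Real.lt_sInf_add_pos ⟨_, Set.mem_range_self 0⟩ hε
    (s := Set.range (costW p T))
  exact ⟨c, hr⟩

lemma clCost_replicate {p : ℕ} (hp : 1 ≤ p) {d : ℕ} (m : ℕ) (a : Fin d → ℤ) :
    clCost p (Multiset.replicate m a) = 0 := by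
  refine le_antisymm ?_ (clCost_nonneg p _)
  have := clCost_le_costW p (Multiset.replicate m a) (fun i => (a i : ℝ))
  rw [costW_replicate] at this
  simpa [lpNorm_zero hp] using this


lemma sum_update_helper {n : ℕ} {β : Type*} {M : Type*} [AddCommMonoid M]
    (X : Fin n → β) (F : Fin n → β → M) (i : Fin n) (T : β) :
    (∑ j, F j (Function.update X i T j)) + F i (X i) = (∑ j, F j (X j)) + F i T := by
  have h1 : (fun j => F j (Function.update X i T j))
      = Function.update (fun j => F j (X j)) i (F i T) := by
    funext j
    by_cases h : j = i
    · subst h; simp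
    · simp [Function.update_apply, h]
  rw [h1, Finset.sum_update_of_mem (Finset.mem_univ i)]
  rw [← Finset.sum_erase_add univ _ (Finset.mem_univ i), Finset.erase_eq]
  abel

lemma redistribute {α : Type*} [DecidableEq α] (a : α) (g : α → ℝ) :
    ∀ (R : Multiset α) (n : ℕ) (X : Fin n → Multiset α)
      (w : Fin n → α → ℝ),
      (∀ i y, w i y ≤ w i a + g y) →
      R.card ≤ ∑ i, (X i).count a →
      ∃ X' : Fin n → Multiset α,
        ((∑ i, X' i) + Multiset.replicate R.card a = (∑ i, X i) + R) ∧
        (∀ i, (X' i).card = (X i).card) ∧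
        (∑ i, ((X' i).map (w i)).sum ≤ ∑ i, ((X i).map (w i)).sum + (R.map g).sum) := by
  intro R
  induction R using Multiset.induction_on with
  | empty =>
    intro n X w hw hcard
    exact ⟨X, by simp, fun i => rfl, by simp⟩
  | cons y R0 ih =>
    intro n X w hw hcard
    rw [Multiset.card_cons] at hcard
    obtain ⟨i, hi⟩ : ∃ i, 0 < (X i).count a := by
      by_contra hc
      push_neg at hc
      have h0 : ∑ i, (X i).count a = 0 :=
        Finset.sum_eq_zero (fun i _ => Nat.le_zero.mp (hc i))
      omega
    have ha : a ∈ X i := Multiset.count_pos.mp hi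
    set T : Multiset α := y ::ₘ (X i).erase a with hT
    set X1 : Fin n → Multiset α := Function.update X i T with hX1
    have hXi : X i = a ::ₘ (X i).erase a := (Multiset.cons_erase ha).symm
    -- cards of X1
    have hcard1 : ∀ j, (X1 j).card = (X j).card := by
      intro j
      by_cases h : j = i
      · subst h
        simp only [hX1, Function.update_self, hT]
        rw [Multiset.card_cons, Multiset.card_erase_of_mem ha, Nat.pred_eq_sub_one]
        have : 0 < (X j).card := Multiset.card_pos_iff_exists_mem.mpr ⟨a, ha⟩
        omega
      · simp [hX1, Function.update_of_ne h]
    -- multiset sum identity : ∑ X1 + {a} = ∑ X + {y}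
    have hmsum : (∑ j, X1 j) + {a} = (∑ j, X j) + {y} := by
      have h := sum_update_helper X (fun _ M => M) i T
      rw [← hX1] at h
      have h3 : T + {a} = X i + {y} := by
        rw [hT]
        conv_rhs => rw [hXi]
        rw [← Multiset.singleton_add, ← Multiset.singleton_add]
        abel
      have h4 : (∑ j, X1 j) + {a} + X i = (∑ j, X j) + {y} + X i := by
        calc (∑ j, X1 j) + {a} + X i = ((∑ j, X1 j) + X i) + {a} := by abel
          _ = ((∑ j, X j) + T) + {a} := by rw [h]
          _ = (∑ j, X j) + (T + {a}) := by abel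
          _ = (∑ j, X j) + (X i + {y}) := by rw [h3]
          _ = (∑ j, X j) + {y} + X i := by abel
      exact add_right_cancel h4
    -- count bound for recursion
    have hcount1 : R0.card ≤ ∑ j, (X1 j).count a := by
      have h := sum_update_helper X (fun _ M => M.count a) i T
      rw [← hX1] at h
      have hTc : (X i).count a ≤ T.count a + 1 := by
        rw [hT, Multiset.count_cons, Multiset.count_erase_self]
        split_ifs <;> omega
      omega
    obtain ⟨X'', hsum'', hcard'', hcost''⟩ := ih n X1 w hw hcount1
    refine ⟨X'', ?_, fun j => (hcard'' j).trans (hcard1 j), ?_⟩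
    · rw [Multiset.card_cons, Multiset.replicate_succ]
      calc (∑ j, X'' j) + (a ::ₘ Multiset.replicate R0.card a)
          = ((∑ j, X'' j) + Multiset.replicate R0.card a) + {a} := by
            rw [← Multiset.singleton_add]; abel
        _ = (∑ j, X1 j) + R0 + {a} := by rw [hsum'']
        _ = ((∑ j, X1 j) + {a}) + R0 := by abel
        _ = ((∑ j, X j) + {y}) + R0 := by rw [hmsum]
        _ = (∑ j, X j) + (y ::ₘ R0) := by rw [← Multiset.singleton_add]; abel
    · have hcostT : (T.map (w i)).sum = w i y + (((X i).erase a).map (w i)).sum := by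
        rw [hT]; simp
      have hcostXi : ((X i).map (w i)).sum = w i a + (((X i).erase a).map (w i)).sum := by
        conv_lhs => rw [hXi]
        simp
      have h := sum_update_helper X (fun j M => (M.map (w j)).sum) i T
      rw [← hX1] at h
      have hgy : ((y ::ₘ R0).map g).sum = g y + (R0.map g).sum := by simp
      have hwy := hw i y
      rw [hgy]
      linarith

lemma exists_partition {α : Type*} [DecidableEq α] : ∀ (k : ℕ) (s : ℕ) (P : Multiset α), P.card = s * k →
    ∃ X : Fin k → Multiset α, (∑ i, X i = P) ∧ ∀ i, (X i).card = s := by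
  intro k
  induction k with
  | zero =>
    intro s P hP
    refine ⟨fun i => i.elim0, ?_, fun i => i.elim0⟩
    simp only [Nat.mul_zero] at hP
    simp [(Multiset.card_eq_zero.mp hP)]
  | succ k ih =>
    intro s P hP
    have hsle : s ≤ P.card := by rw [hP, Nat.mul_succ]; omega
    set T : Multiset α := ((P.toList.take s : List α) : Multiset α) with hTdef
    have hTle : T ≤ P := by
      have h1 : (P.toList.take s : Multiset α) ≤ (P.toList : Multiset α) :=
        Multiset.coe_le.mpr (List.take_sublist s P.toList).subperm
      rwa [Multiset.coe_toList] at h1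
    have hTcard : T.card = s := by
      rw [hTdef, Multiset.coe_card, List.length_take, Multiset.length_toList]
      omega
    have hrest : (P - T).card = s * k := by
      rw [Multiset.card_sub hTle, hTcard, hP, Nat.mul_succ]
      omega
    obtain ⟨X0, hX0sum, hX0card⟩ := ih s (P - T) hrest
    refine ⟨Fin.cons T X0, ?_, ?_⟩
    · rw [Fin.sum_univ_succ]
      simp only [Fin.cons_zero, Fin.cons_succ]
      rw [hX0sum]
      exact add_tsub_cancel_of_le hTle
    · intro i
      refine Fin.cases ?_ ?_ i
      · simpa using hTcard
      · intro j; simpa using hX0card j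

/-- removing a group of `s` identical points (one full cluster's worth)
preserves the optimum equal-clustering cost, provided `Opt(P,k) ≤ B` and `s ≥ 4B+1`. -/
theorem removing_full_identical_cluster_preserves_opt
    {d k s B : ℕ} (p : ℕ) (hp : 1 ≤ p) (hk : 0 < k)
    (P : Multiset (Fin d → ℤ)) (hP : P.card = s * k)
    (xj : Fin d → ℤ) (hS : Multiset.replicate s xj ≤ P)
    (hOpt : OptCost p P k s ≤ (B : ℝ)) (hs : 4 * B + 1 ≤ s) :
    OptCost p (P - Multiset.replicate s xj) (k - 1) s = OptCost p P k s := by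
  obtain ⟨k', rfl⟩ : ∃ k', k = k' + 1 := ⟨k - 1, (Nat.succ_pred_eq_of_pos hk).symm⟩
  have hkk : k' + 1 - 1 = k' := rfl
  rw [hkk]
  set P' := P - Multiset.replicate s xj with hP'def
  have hcardrep : (Multiset.replicate s xj).card = s := Multiset.card_replicate s xj
  have hP'card : P'.card = s * k' := by
    rw [hP'def, Multiset.card_sub hS, hcardrep, hP, Nat.mul_succ]; omega
  set SS : Set ℝ := {r | ∃ X : Fin (k'+1) → Multiset (Fin d → ℤ),
    (∑ i, X i = P) ∧ (∀ i, (X i).card = s) ∧ r = ∑ i, clCost p (X i)} with hSS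
  set SS' : Set ℝ := {r | ∃ X : Fin k' → Multiset (Fin d → ℤ),
    (∑ i, X i = P') ∧ (∀ i, (X i).card = s) ∧ r = ∑ i, clCost p (X i)} with hSS'
  have hOptS : OptCost p P (k'+1) s = sInf SS := rfl
  have hOptS' : OptCost p P' k' s = sInf SS' := rfl
  rw [hOptS] at hOpt
  rw [hOptS, hOptS']
  have hbdd : BddBelow SS := by
    refine ⟨0, ?_⟩
    rintro r ⟨X, _, _, rfl⟩
    exact Finset.sum_nonneg fun i _ => clCost_nonneg p _
  have hbdd' : BddBelow SS' := by
    refine ⟨0, ?_⟩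
    rintro r ⟨X, _, _, rfl⟩
    exact Finset.sum_nonneg fun i _ => clCost_nonneg p _
  have hne : SS.Nonempty := by
    obtain ⟨X, h1, h2⟩ := exists_partition (k'+1) s P hP
    exact ⟨_, X, h1, h2, rfl⟩
  have hne' : SS'.Nonempty := by
    obtain ⟨X, h1, h2⟩ := exists_partition k' s P' hP'card
    exact ⟨_, X, h1, h2, rfl⟩
  have dir1 : sInf SS ≤ sInf SS' := by
    apply le_csInf hne'
    rintro r ⟨X', h1, h2, rfl⟩
    apply csInf_le hbdd
    refine ⟨Fin.cons (Multiset.replicate s xj) X', ?_, ?_, ?_⟩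
    · rw [Fin.sum_univ_succ]
      simp only [Fin.cons_zero, Fin.cons_succ]
      rw [h1, hP'def]
      exact add_tsub_cancel_of_le hS
    · intro i
      refine Fin.cases ?_ ?_ i
      · simpa using hcardrep
      · intro j; simpa using h2 j
    · rw [Fin.sum_univ_succ]
      simp only [Fin.cons_zero, Fin.cons_succ]
      rw [clCost_replicate hp, zero_add]
  have dir2 : sInf SS' ≤ sInf SS := by
    by_contra hcon
    push_neg at hcon
    set ε : ℝ := min ((sInf SS' - sInf SS)/2) (1/8) with hεdef
    have hε : 0 < ε := lt_min (by linarith) (by norm_num)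
    have hε8 : ε ≤ 1/8 := min_le_right _ _
    have hεd : ε ≤ (sInf SS' - sInf SS)/2 := min_le_left _ _
    obtain ⟨r, hrS, hr⟩ := Real.lt_sInf_add_pos hne (half_pos hε)
    obtain ⟨X, hXsum, hXcard, rfl⟩ := hrS
    have hck : (0:ℝ) < (ε/2) / (k'+1) := by positivity
    choose c hc using fun i => exists_center p (X i) hck
    set C : ℝ := ∑ i, costW p (X i) (c i) with hC
    have hCr : C ≤ (∑ i, clCost p (X i)) + ε/2 := by
      rw [hC]
      calc ∑ i, costW p (X i) (c i) ≤ ∑ i, (clCost p (X i) + (ε/2)/(k'+1)) :=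
            Finset.sum_le_sum fun i _ => (hc i).le
        _ = (∑ i, clCost p (X i)) + ε/2 := by
            rw [Finset.sum_add_distrib, Finset.sum_const, Finset.card_univ, Fintype.card_fin]
            congr 1
            have hk1 : (k':ℝ) + 1 ≠ 0 := by positivity
            rw [nsmul_eq_mul]; push_cast
            field_simp
    have hsInfB : sInf SS ≤ (B:ℝ) := hOpt
    have hCB : C ≤ (B:ℝ) + 1/4 := by linarith
    -- count of xj in clusters
    have hmsum : s ≤ ∑ i, (X i).count xj := by
      have h1 : s ≤ P.count xj := Multiset.le_count_iff_replicate_le.mpr hS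
      rw [← hXsum, Multiset.count_sum'] at h1
      exact h1
    have hmles : ∀ i, (X i).count xj ≤ s := fun i => by
      calc (X i).count xj ≤ (X i).card := Multiset.count_le_card _ _
        _ = s := hXcard i
    have hrep_le : ∀ i, Multiset.replicate ((X i).count xj) xj ≤ X i := fun i =>
      Multiset.le_count_iff_replicate_le.mp (le_refl _)
    have hsplit : ∀ i, X i
        = Multiset.replicate ((X i).count xj) xj + (X i - Multiset.replicate ((X i).count xj) xj) :=
      fun i => (add_tsub_cancel_of_le (hrep_le i)).symm
    have hcost_lower : ∀ i, ((X i).count xj : ℝ) * lpNorm p (fun t => c i t - (xj t : ℝ))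
        ≤ costW p (X i) (c i) := by
      intro i
      conv_rhs => rw [hsplit i]
      rw [costW_add, costW_replicate]
      have h0 := costW_nonneg p (X i - Multiset.replicate ((X i).count xj) xj) (c i)
      linarith
    -- choose the cluster i0 with a copy of xj, minimizing distance of center to xj
    have hSupp : (univ.filter (fun i => 0 < (X i).count xj)).Nonempty := by
      by_contra hcontra
      rw [Finset.not_nonempty_iff_eq_empty, Finset.filter_eq_empty_iff] at hcontra
      have h0 : ∑ i, (X i).count xj = 0 :=
        Finset.sum_eq_zero (fun i _ => by have := hcontra (Finset.mem_univ i); omega)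
      omega
    obtain ⟨i0, hi0mem, hi0min⟩ :=
      Finset.exists_min_image _ (fun i => lpNorm p (fun t => c i t - (xj t : ℝ))) hSupp
    set δ : ℝ := lpNorm p (fun t => c i0 t - (xj t : ℝ)) with hδdef
    have hδnn : 0 ≤ δ := lpNorm_nonneg _ _
    have hsδ : (s:ℝ) * δ ≤ C := by
      have h1 : ∀ i, ((X i).count xj : ℝ) * δ
          ≤ ((X i).count xj : ℝ) * lpNorm p (fun t => c i t - (xj t : ℝ)) := by
        intro i
        by_cases hmi : 0 < (X i).count xj
        · exact mul_le_mul_of_nonneg_left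
            (hi0min i (Finset.mem_filter.mpr ⟨Finset.mem_univ i, hmi⟩)) (by positivity)
        · have hz : (X i).count xj = 0 := by omega
          simp [hz]
      calc (s:ℝ) * δ ≤ (∑ i, ((X i).count xj : ℝ)) * δ := by
            apply mul_le_mul_of_nonneg_right _ hδnn
            have := hmsum
            push_cast
            exact_mod_cast Nat.cast_le.mpr this
        _ = ∑ i, ((X i).count xj : ℝ) * δ := by rw [Finset.sum_mul]
        _ ≤ ∑ i, ((X i).count xj : ℝ) * lpNorm p (fun t => c i t - (xj t : ℝ)) :=
            Finset.sum_le_sum fun i _ => h1 i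
        _ ≤ ∑ i, costW p (X i) (c i) := Finset.sum_le_sum fun i _ => hcost_lower i
        _ = C := rfl
    have hsR : (4*(B:ℝ)+1) ≤ s := by exact_mod_cast hs
    have hδ4 : δ ≤ 1/4 := by
      have hposB : (0:ℝ) < 4*(B:ℝ)+1 := by positivity
      have h1 : (4*(B:ℝ)+1) * δ ≤ (s:ℝ) * δ := mul_le_mul_of_nonneg_right hsR hδnn
      have h2 : (4*(B:ℝ)+1) * δ ≤ (4*(B:ℝ)+1) * (1/4) := by linarith
      exact le_of_mul_le_mul_left h2 hposB
    -- the residue R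
    set M : ℕ := (X i0).count xj with hM
    set R : Multiset (Fin d → ℤ) := X i0 - Multiset.replicate M xj with hRdef
    have hRcard : R.card = s - M := by
      rw [hRdef, Multiset.card_sub (hrep_le i0), Multiset.card_replicate, hXcard i0]
    have hRsplit : X i0 = Multiset.replicate M xj + R := hsplit i0
    have hRxj : ∀ y ∈ R, y ≠ xj := by
      intro y hy heq
      have hcnt : R.count xj = 0 := by
        rw [hRdef, Multiset.count_sub, Multiset.count_replicate]
        simp [hM]
      subst heq
      have := Multiset.count_pos.mpr hy
      omega
    -- key norm inequalities
    have htri : ∀ (cc : Fin d → ℝ) (y : Fin d → ℤ),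
        lpNorm p (fun t => cc t - (y t:ℝ))
          ≤ lpNorm p (fun t => cc t - (xj t:ℝ)) + lpNorm p (fun t => (xj t:ℝ) - (y t:ℝ)) := by
      intro cc y
      have h := lpNorm_triangle hp (fun t => cc t - (xj t:ℝ)) (fun t => (xj t:ℝ) - (y t:ℝ))
      have he : (fun t => (fun t => cc t - (xj t:ℝ)) t + (fun t => (xj t:ℝ) - (y t:ℝ)) t)
          = fun t => cc t - (y t:ℝ) := by
        funext t; ring
      rwa [he] at h
    have hgW : ∀ y : Fin d → ℤ,
        lpNorm p (fun t => (xj t:ℝ) - (y t:ℝ)) ≤ δ + lpNorm p (fun t => c i0 t - (y t:ℝ)) := by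
      intro y
      have h := lpNorm_triangle hp (fun t => (xj t:ℝ) - c i0 t) (fun t => c i0 t - (y t:ℝ))
      have he : (fun t => (fun t => (xj t:ℝ) - c i0 t) t + (fun t => c i0 t - (y t:ℝ)) t)
          = fun t => (xj t:ℝ) - (y t:ℝ) := by
        funext t; ring
      rw [he] at h
      have hneg : lpNorm p (fun t => (xj t:ℝ) - c i0 t)
          = lpNorm p (fun t => c i0 t - (xj t:ℝ)) := by
        rw [show (fun t => (xj t:ℝ) - c i0 t) = (fun t => -(c i0 t - (xj t:ℝ))) from
          funext fun t => by ring]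
        exact lpNorm_neg p _
      rw [hneg] at h
      exact h
    have hwlow : ∀ y ∈ R, (1:ℝ) - δ ≤ lpNorm p (fun t => c i0 t - (y t:ℝ)) := by
      intro y hy
      have h1 : (1:ℝ) ≤ lpNorm p (fun t => (xj t:ℝ) - (y t:ℝ)) :=
        lpNorm_int_one_le hp (fun h => (hRxj y hy) (by rw [h]))
      have h2 := hgW y
      linarith
    -- lower bound on the cost of cluster i0
    have hcosti0 : costW p (X i0) (c i0)
        = (M:ℝ) * δ + (R.map (fun y => lpNorm p (fun t => c i0 t - (y t:ℝ)))).sum := by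
      conv_lhs => rw [hRsplit]
      rw [costW_add, costW_replicate]
      rfl
    have hRsum : ((s:ℝ) - M) * (1 - δ)
        ≤ (R.map (fun y => lpNorm p (fun t => c i0 t - (y t:ℝ)))).sum := by
      have h1 : (R.map (fun y => lpNorm p (fun t => c i0 t - (y t:ℝ)))).card • ((1:ℝ) - δ)
          ≤ (R.map (fun y => lpNorm p (fun t => c i0 t - (y t:ℝ)))).sum := by
        apply Multiset.card_nsmul_le_sum
        intro x hx
        obtain ⟨y, hy, rfl⟩ := Multiset.mem_map.mp hx
        exact hwlow y hy
      rw [Multiset.card_map, hRcard] at h1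
      rw [nsmul_eq_mul] at h1
      have hcast : ((s - M : ℕ) : ℝ) = (s:ℝ) - M := by
        have := hmles i0
        rw [Nat.cast_sub this]
      rwa [hcast] at h1
    have hi0C : costW p (X i0) (c i0) ≤ C :=
      Finset.single_le_sum (f := fun i => costW p (X i) (c i))
        (fun i _ => costW_nonneg p _ _) (Finset.mem_univ i0)
    have hMs : (M:ℝ) ≤ s := by exact_mod_cast hmles i0
    have h2m : (s:ℝ) ≤ 2 * M := by
      have hsm : (0:ℝ) ≤ (s:ℝ) - M := by linarith
      have hprod : ((s:ℝ) - M) * δ ≤ ((s:ℝ) - M) * (1/4) :=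
        mul_le_mul_of_nonneg_left hδ4 hsm
      have hMδ : (0:ℝ) ≤ (M:ℝ) * δ := by positivity
      linarith [hRsum, hcosti0, hi0C, hCB, hsR, hδnn, hprod, hMδ]
    -- redistribute
    have hcard_red : R.card ≤ ∑ j : Fin k', (X (i0.succAbove j)).count xj := by
      have h : ∑ i : Fin (k'+1), (X i).count xj
          = M + ∑ j : Fin k', (X (i0.succAbove j)).count xj :=
        Fin.sum_univ_succAbove (fun i => (X i).count xj) i0
      rw [hRcard]
      calc s - M ≤ (M + ∑ j : Fin k', (X (i0.succAbove j)).count xj) - M :=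
            Nat.sub_le_sub_right (h ▸ hmsum) M
        _ = ∑ j : Fin k', (X (i0.succAbove j)).count xj := by
            rw [Nat.add_sub_cancel_left]
    obtain ⟨X', hsum', hcard', hcost'⟩ := redistribute xj
      (fun y => lpNorm p (fun t => (xj t:ℝ) - (y t:ℝ))) R k'
      (fun j => X (i0.succAbove j))
      (fun j y => lpNorm p (fun t => c (i0.succAbove j) t - (y t:ℝ)))
      (fun j y => htri (c (i0.succAbove j)) y)
      hcard_red
    -- the new clustering sums to P'
    have hfinal : (∑ j, X' j) + Multiset.replicate s xj = P := by
      have hs' : s = (s - M) + M := (Nat.sub_add_cancel (hmles i0)).symm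
      have hrepsplit : Multiset.replicate s xj
          = Multiset.replicate (s - M) xj + Multiset.replicate M xj := by
        rw [← Multiset.replicate_add, ← hs']
      rw [hrepsplit]
      have hPdec : P = X i0 + ∑ j, X (i0.succAbove j) := by
        rw [← hXsum]
        exact Fin.sum_univ_succAbove X i0
      rw [hRcard] at hsum'
      calc (∑ j, X' j) + (Multiset.replicate (s - M) xj + Multiset.replicate M xj)
          = ((∑ j, X' j) + Multiset.replicate (s - M) xj) + Multiset.replicate M xj := by abel
        _ = ((∑ j, X (i0.succAbove j)) + R) + Multiset.replicate M xj := by rw [hsum']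
        _ = (Multiset.replicate M xj + R) + ∑ j, X (i0.succAbove j) := by abel
        _ = X i0 + ∑ j, X (i0.succAbove j) := by rw [← hRsplit]
        _ = P := hPdec.symm
    have hsumP' : ∑ j, X' j = P' := by
      rw [hP'def]
      exact eq_tsub_of_add_eq hfinal
    -- cost bound for the new clustering
    have hRg : ((R.map (fun y => lpNorm p (fun t => (xj t:ℝ) - (y t:ℝ)))).sum)
        ≤ (R.map (fun y => lpNorm p (fun t => c i0 t - (y t:ℝ)))).sum + ((s:ℝ) - M) * δ := by
      have h1 : (R.map (fun y => lpNorm p (fun t => (xj t:ℝ) - (y t:ℝ)))).sum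
          ≤ (R.map (fun y => lpNorm p (fun t => c i0 t - (y t:ℝ)) + δ)).sum := by
        apply Multiset.sum_map_le_sum_map
        intro y _
        have := hgW y
        linarith
      have h2 : (R.map (fun y => lpNorm p (fun t => c i0 t - (y t:ℝ)) + δ)).sum
          = (R.map (fun y => lpNorm p (fun t => c i0 t - (y t:ℝ)))).sum
            + (R.map (fun _ => δ)).sum := by
        rw [← Multiset.sum_map_add]
      have h3 : (R.map (fun _ : Fin d → ℤ => δ)).sum = ((s:ℝ) - M) * δ := by
        rw [Multiset.map_const', Multiset.sum_replicate, hRcard, nsmul_eq_mul]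
        congr 1
        rw [Nat.cast_sub (hmles i0)]
      rw [h2, h3] at h1
      exact h1
    have hCdec : C = costW p (X i0) (c i0) + ∑ j, costW p (X (i0.succAbove j)) (c (i0.succAbove j)) := by
      rw [hC]
      exact Fin.sum_univ_succAbove (fun i => costW p (X i) (c i)) i0
    have hclW : ∀ j, clCost p (X' j)
        ≤ ((X' j).map (fun y => lpNorm p (fun t => c (i0.succAbove j) t - (y t:ℝ)))).sum :=
      fun j => clCost_le_costW p (X' j) (c (i0.succAbove j))
    have hcostWeq : ∀ j, ((X (i0.succAbove j)).map
          (fun y => lpNorm p (fun t => c (i0.succAbove j) t - (y t:ℝ)))).sum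
        = costW p (X (i0.succAbove j)) (c (i0.succAbove j)) := fun j => rfl
    have hr'C : ∑ j, clCost p (X' j) ≤ C := by
      have h1 : ∑ j, clCost p (X' j)
          ≤ ∑ j, ((X' j).map (fun y => lpNorm p (fun t => c (i0.succAbove j) t - (y t:ℝ)))).sum :=
        Finset.sum_le_sum fun j _ => hclW j
      have h2 := hcost'
      have h3 : ∑ j, ((X (i0.succAbove j)).map
            (fun y => lpNorm p (fun t => c (i0.succAbove j) t - (y t:ℝ)))).sum
          = ∑ j, costW p (X (i0.succAbove j)) (c (i0.succAbove j)) :=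
        Finset.sum_congr rfl fun j _ => hcostWeq j
      have hfin : ((s:ℝ) - 2*M) * δ ≤ 0 :=
        mul_nonpos_of_nonpos_of_nonneg (by linarith) hδnn
      rw [h3] at h2
      -- combine everything
      have := hcosti0
      rw [hCdec]
      linarith [h1, h2, hRg, hcosti0, hfin]
    -- contradiction
    have hmem : (∑ j, clCost p (X' j)) ∈ SS' := ⟨X', hsumP', fun j => (hcard' j).trans (hXcard _), rfl⟩
    have hle : sInf SS' ≤ ∑ j, clCost p (X' j) := csInf_le hbdd' hmem
    have : sInf SS' < sInf SS' := by
      calc sInf SS' ≤ ∑ j, clCost p (X' j) := hle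
        _ ≤ C := hr'C
        _ ≤ (∑ i, clCost p (X i)) + ε/2 := hCr
        _ < sInf SS + ε := by linarith
        _ ≤ sInf SS + (sInf SS' - sInf SS)/2 := by linarith
        _ < sInf SS' := by linarith
    exact lt_irrefl _ this
  exact le_antisymm dir2 dir1
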